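/- arXiv:2509.21077 — 8 statements merged into one kernel-verified Lean document; each statement's English description precedes it below -/
import Mathlib

section
/- Suppose the KKT conditions of the SQP quadratic-programming subproblem hold, the matrix B is positive definite, and the penalty parameters satisfy ρ_j ≥ |λ_j| for every j and v_j ≥ μ_j for every j. Then the directional-derivative value of the ℓ1 merit function along d is nonpositive: c ⬝ᵥ d − ∑_j ρ_j·|h_j| − ∑_j v_j·max(0, −g_j) ≤ 0. -/
open Matrix

/-- If the KKT conditions of the SQP QP subproblem hold, `B` is positive definite,
and the penalty parameters dominate the multipliers (`ρ j ≥ |λ j|`, `v j ≥ μ j`),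
then the directional derivative of the ℓ1 merit function along `d` is nonpositive. -/
theorem sqp_merit_directional_derivative_nonpos
    {n p q : ℕ} (d : Fin n → ℝ) (B : Matrix (Fin n) (Fin n) ℝ)
    (c : Fin n → ℝ) (Ah : Matrix (Fin p) (Fin n) ℝ) (Ag : Matrix (Fin q) (Fin n) ℝ)
    (h : Fin p → ℝ) (g : Fin q → ℝ) (lam : Fin p → ℝ) (mu : Fin q → ℝ)
    (ρ : Fin p → ℝ) (v : Fin q → ℝ)
    (hstat : B.mulVec d + c + Ah.transpose.mulVec lam - Ag.transpose.mulVec mu = 0)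
    (hfeas : Ah.mulVec d + h = 0)
    (gfeas : ∀ j, (Ag.mulVec d + g) j ≥ 0)
    (hdual : ∀ j, mu j ≥ 0)
    (hcomp : mu ⬝ᵥ (Ag.mulVec d + g) = 0)
    (hB : B.PosDef)
    (hρ : ∀ j, ρ j ≥ |lam j|) (hv : ∀ j, v j ≥ mu j) :
    c ⬝ᵥ d - (∑ j, ρ j * |h j|) - (∑ j, v j * max 0 (-(g j))) ≤ 0 := by
  have hc : c = -(B.mulVec d) - Ah.transpose.mulVec lam + Ag.transpose.mulVec mu := by
    funext i
    have := congrFun hstat i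
    simp only [Pi.add_apply, Pi.sub_apply, Pi.zero_apply, Pi.neg_apply] at this ⊢
    linarith
  have hAhd : Ah.mulVec d = -h := eq_neg_of_add_eq_zero_left hfeas
  have h1 : Ah.transpose.mulVec lam ⬝ᵥ d = -(lam ⬝ᵥ h) := by
    rw [Matrix.mulVec_transpose, ← Matrix.dotProduct_mulVec, hAhd, dotProduct_neg]
  have h2 : Ag.transpose.mulVec mu ⬝ᵥ d = -(mu ⬝ᵥ g) := by
    rw [Matrix.mulVec_transpose, ← Matrix.dotProduct_mulVec]
    have := hcomp
    rw [dotProduct_add] at this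
    linarith
  have hcd : c ⬝ᵥ d = -(d ⬝ᵥ B.mulVec d) - (-(lam ⬝ᵥ h)) + (-(mu ⬝ᵥ g)) := by
    rw [hc, add_dotProduct, sub_dotProduct, neg_dotProduct, h1, h2,
      dotProduct_comm]
  have hBd : 0 ≤ d ⬝ᵥ B.mulVec d := by
    have := hB.posSemidef.dotProduct_mulVec_nonneg d
    simpa using this
  have hlh : lam ⬝ᵥ h ≤ ∑ j, ρ j * |h j| := by
    rw [dotProduct]
    apply Finset.sum_le_sum
    intro j _
    calc lam j * h j ≤ |lam j * h j| := le_abs_self _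
    _ = |lam j| * |h j| := abs_mul _ _
    _ ≤ ρ j * |h j| := mul_le_mul_of_nonneg_right (hρ j) (abs_nonneg _)
  have hmg : -(mu ⬝ᵥ g) ≤ ∑ j, v j * max 0 (-(g j)) := by
    rw [dotProduct, ← Finset.sum_neg_distrib]
    apply Finset.sum_le_sum
    intro j _
    calc -(mu j * g j) = mu j * (-(g j)) := by ring
    _ ≤ mu j * max 0 (-(g j)) := mul_le_mul_of_nonneg_left (le_max_right _ _) (hdual j)
    _ ≤ v j * max 0 (-(g j)) := mul_le_mul_of_nonneg_right (hv j) (le_max_left _ _)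
  linarith [hcd, hBd, hlh, hmg]
end

section
/- Suppose the KKT conditions of the SQP quadratic-programming subproblem hold, the matrix B is positive definite, and the penalty parameters satisfy ρ_j ≥ |λ_j| for every j and v_j ≥ μ_j for every j. Then the directional-derivative value of the ℓ1 merit function along d satisfies the sharper bound c ⬝ᵥ d − ∑_j ρ_j·|h_j| − ∑_j v_j·max(0, −g_j) ≤ −(d ⬝ᵥ B.mulVec d); in particular it is strictly negative whenever d ≠ 0. -/
open Matrix

/-- Under the KKT conditions of the SQP QP subproblem, positive definiteness of `B`,
and penalty dominance (`ρ j ≥ |λ j|`, `v j ≥ μ j`), the directional derivative of the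
ℓ1 merit function along `d` is at most `-(d ⬝ᵥ B.mulVec d)`; in particular it is
strictly negative whenever `d ≠ 0`. -/
theorem sqp_merit_directional_derivative_bound
    {n p q : ℕ} (d : Fin n → ℝ) (B : Matrix (Fin n) (Fin n) ℝ)
    (c : Fin n → ℝ) (Ah : Matrix (Fin p) (Fin n) ℝ) (Ag : Matrix (Fin q) (Fin n) ℝ)
    (h : Fin p → ℝ) (g : Fin q → ℝ) (lam : Fin p → ℝ) (mu : Fin q → ℝ)
    (ρ : Fin p → ℝ) (v : Fin q → ℝ)
    (hstat : B.mulVec d + c + Ah.transpose.mulVec lam - Ag.transpose.mulVec mu = 0)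
    (hfeas : Ah.mulVec d + h = 0)
    (gfeas : ∀ j, (Ag.mulVec d + g) j ≥ 0)
    (hdual : ∀ j, mu j ≥ 0)
    (hcomp : mu ⬝ᵥ (Ag.mulVec d + g) = 0)
    (hB : B.PosDef)
    (hρ : ∀ j, ρ j ≥ |lam j|) (hv : ∀ j, v j ≥ mu j) :
    (c ⬝ᵥ d - (∑ j, ρ j * |h j|) - (∑ j, v j * max 0 (-(g j))) ≤ -(d ⬝ᵥ B.mulVec d)) ∧
      (d ≠ 0 → c ⬝ᵥ d - (∑ j, ρ j * |h j|) - (∑ j, v j * max 0 (-(g j))) < 0) := by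
  have hAh : Ah.mulVec d = -h := by
    have := hfeas
    funext i
    have := congrFun hfeas i
    simp only [Pi.add_apply, Pi.zero_apply] at this
    simp [Pi.neg_apply]
    linarith
  have hdot : (B.mulVec d + c + Ah.transpose.mulVec lam - Ag.transpose.mulVec mu) ⬝ᵥ d = 0 := by
    rw [hstat]; simp
  have h1 : Ah.transpose.mulVec lam ⬝ᵥ d = lam ⬝ᵥ Ah.mulVec d := by
    rw [Matrix.mulVec_transpose, ← Matrix.dotProduct_mulVec]
  have h2 : Ag.transpose.mulVec mu ⬝ᵥ d = mu ⬝ᵥ Ag.mulVec d := by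
    rw [Matrix.mulVec_transpose, ← Matrix.dotProduct_mulVec]
  have h3 : mu ⬝ᵥ Ag.mulVec d = -(mu ⬝ᵥ g) := by
    have := hcomp
    rw [dotProduct_add] at this
    linarith
  have h4 : lam ⬝ᵥ Ah.mulVec d = -(lam ⬝ᵥ h) := by
    rw [hAh, dotProduct_neg]
  have key : c ⬝ᵥ d = -(d ⬝ᵥ B.mulVec d) + lam ⬝ᵥ h - mu ⬝ᵥ g := by
    rw [sub_dotProduct, add_dotProduct, add_dotProduct] at hdot
    have hcomm : B.mulVec d ⬝ᵥ d = d ⬝ᵥ B.mulVec d := dotProduct_comm _ _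
    rw [h1, h2, h3, h4, hcomm] at hdot
    linarith
  have hsum1 : lam ⬝ᵥ h ≤ ∑ j, ρ j * |h j| := by
    apply Finset.sum_le_sum
    intro j _
    calc lam j * h j ≤ |lam j * h j| := le_abs_self _
      _ = |lam j| * |h j| := abs_mul _ _
      _ ≤ ρ j * |h j| := by
          apply mul_le_mul_of_nonneg_right (hρ j) (abs_nonneg _)
  have hsum2 : -(mu ⬝ᵥ g) ≤ ∑ j, v j * max 0 (-(g j)) := by
    rw [dotProduct, ← Finset.sum_neg_distrib]
    apply Finset.sum_le_sum
    intro j _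
    rcases le_or_gt 0 (g j) with hg | hg
    · have : max 0 (-(g j)) = 0 := max_eq_left (by linarith)
      rw [this, mul_zero]
      have := mul_nonneg (hdual j) hg
      linarith
    · have : max 0 (-(g j)) = -(g j) := max_eq_right (by linarith)
      rw [this]
      have h1 : -(mu j * g j) = mu j * (-(g j)) := by ring
      rw [h1]
      apply mul_le_mul_of_nonneg_right (hv j) (by linarith)
  have hbound : c ⬝ᵥ d - (∑ j, ρ j * |h j|) - (∑ j, v j * max 0 (-(g j))) ≤ -(d ⬝ᵥ B.mulVec d) := by
    rw [key]; linarith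
  refine ⟨hbound, fun hd => ?_⟩
  have hpos : 0 < d ⬝ᵥ B.mulVec d := by simpa using hB.dotProduct_mulVec_pos hd
  linarith
end

section
/- Suppose the KKT conditions of the SQP quadratic-programming subproblem hold (no further relation between the penalty vectors and the multipliers is assumed). Then c ⬝ᵥ d − ∑_j ρ_j·|h_j| − ∑_j v_j·max(0, −g_j) ≤ −(d ⬝ᵥ B.mulVec d) + ∑_j |h_j|·(|λ_j| − ρ_j) + ∑_j max(0, −g_j)·(μ_j − v_j). -/
open Matrix

/-- Under only the KKT conditions of the SQP QP subproblem (no relation between the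
penalty vectors and the multipliers), the directional derivative of the ℓ1 merit
function along `d` is bounded by
`-(d ⬝ᵥ B.mulVec d) + ∑ |h j|·(|λ j| - ρ j) + ∑ max(0, -g j)·(μ j - v j)`. -/
theorem sqp_merit_directional_derivative_general_bound
    {n p q : ℕ} (d : Fin n → ℝ) (B : Matrix (Fin n) (Fin n) ℝ)
    (c : Fin n → ℝ) (Ah : Matrix (Fin p) (Fin n) ℝ) (Ag : Matrix (Fin q) (Fin n) ℝ)
    (h : Fin p → ℝ) (g : Fin q → ℝ) (lam : Fin p → ℝ) (mu : Fin q → ℝ)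
    (ρ : Fin p → ℝ) (v : Fin q → ℝ)
    (hstat : B.mulVec d + c + Ah.transpose.mulVec lam - Ag.transpose.mulVec mu = 0)
    (hfeas : Ah.mulVec d + h = 0)
    (gfeas : ∀ j, (Ag.mulVec d + g) j ≥ 0)
    (hdual : ∀ j, mu j ≥ 0)
    (hcomp : mu ⬝ᵥ (Ag.mulVec d + g) = 0) :
    c ⬝ᵥ d - (∑ j, ρ j * |h j|) - (∑ j, v j * max 0 (-(g j)))
      ≤ -(d ⬝ᵥ B.mulVec d) + (∑ j, |h j| * (|lam j| - ρ j))
        + (∑ j, max 0 (-(g j)) * (mu j - v j)) := by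
  have hAhd : Ah.mulVec d = -h := eq_neg_of_add_eq_zero_left hfeas
  have hAgd : mu ⬝ᵥ Ag.mulVec d = -(mu ⬝ᵥ g) := by
    have : mu ⬝ᵥ Ag.mulVec d + mu ⬝ᵥ g = 0 := by
      rw [← dotProduct_add]; exact hcomp
    linarith
  have h1 := congrArg (fun x => d ⬝ᵥ x) hstat
  simp only [dotProduct_add, dotProduct_sub, dotProduct_zero] at h1
  have h2 : d ⬝ᵥ Ah.transpose.mulVec lam = lam ⬝ᵥ Ah.mulVec d := by
    rw [Matrix.mulVec_transpose, dotProduct_comm, ← Matrix.dotProduct_mulVec]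
  have h3 : d ⬝ᵥ Ag.transpose.mulVec mu = mu ⬝ᵥ Ag.mulVec d := by
    rw [Matrix.mulVec_transpose, dotProduct_comm, ← Matrix.dotProduct_mulVec]
  rw [h2, h3, hAhd, hAgd, dotProduct_neg] at h1
  have key : c ⬝ᵥ d = -(d ⬝ᵥ B.mulVec d) + lam ⬝ᵥ h - mu ⬝ᵥ g := by
    have : d ⬝ᵥ c = c ⬝ᵥ d := dotProduct_comm d c
    linarith
  have hlam : lam ⬝ᵥ h ≤ ∑ j, |h j| * |lam j| := by
    apply Finset.sum_le_sum
    intro j _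
    calc lam j * h j ≤ |lam j * h j| := le_abs_self _
      _ = |h j| * |lam j| := by rw [abs_mul, mul_comm]
  have hmu : -(mu ⬝ᵥ g) ≤ ∑ j, max 0 (-(g j)) * mu j := by
    rw [dotProduct, ← Finset.sum_neg_distrib]
    apply Finset.sum_le_sum
    intro j _
    rw [mul_comm]
    have := hdual j
    nlinarith [le_max_right 0 (-(g j))]
  have e1 : (∑ j, |h j| * (|lam j| - ρ j)) = (∑ j, |h j| * |lam j|) - ∑ j, ρ j * |h j| := by
    rw [← Finset.sum_sub_distrib]
    exact Finset.sum_congr rfl fun j _ => by ring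
  have e2 : (∑ j, max 0 (-(g j)) * (mu j - v j))
      = (∑ j, max 0 (-(g j)) * mu j) - ∑ j, v j * max 0 (-(g j)) := by
    rw [← Finset.sum_sub_distrib]
    exact Finset.sum_congr rfl fun j _ => by ring
  rw [key, e1, e2]
  linarith
end

section
/- Let x, d : Fin n → ℝ, let f : (Fin n → ℝ) → ℝ, h : (Fin n → ℝ) → (Fin p → ℝ), g : (Fin n → ℝ) → (Fin q → ℝ), let c : Fin n → ℝ, let A_h : Matrix (Fin p) (Fin n) ℝ and A_g : Matrix (Fin q) (Fin n) ℝ, and let γ ≥ 0. Assume the Taylor bounds: for all α ∈ [0,1], f(x + α•d) ≤ f(x) + α·(c ⬝ᵥ d) + γ·α²·‖d‖², and for every j, |h_j(x + α•d) − h_j(x) − α·(A_h.mulVec d)_j| ≤ γ·α²·‖d‖² and |g_j(x + α•d) − g_j(x) − α·(A_g.mulVec d)_j| ≤ γ·α²·‖d‖², where ‖d‖² = ∑_i (d i)². Assume linearized feasibility A_h.mulVec d + h(x) = 0 and (A_g.mulVec d + g(x)) j ≥ 0 for all j, and that ρ_j ≥ 0 and v_j ≥ 0 for all j. Then for every α ∈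 [0,1]: φ1(x + α•d) − φ1(x) ≤ α·(c ⬝ᵥ d − ∑_j ρ_j·|h_j(x)| − ∑_j v_j·max(0, −g_j(x))) + (1 + ∑_j ρ_j + ∑_j v_j)·γ·α²·‖d‖². -/
open Matrix

/-- Under Taylor-type bounds on the objective and constraint functions along the
direction `d`, linearized feasibility, and nonnegative penalties, the ℓ1 merit
function decreases along `d` up to a quadratic error term. -/
theorem merit_function_taylor_decrease
    {n p q : ℕ} (x d : Fin n → ℝ)
    (f : (Fin n → ℝ) → ℝ) (h : (Fin n → ℝ) → Fin p → ℝ) (g : (Fin n → ℝ) → Fin q → ℝ)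
    (c : Fin n → ℝ) (Ah : Matrix (Fin p) (Fin n) ℝ) (Ag : Matrix (Fin q) (Fin n) ℝ)
    (ρ : Fin p → ℝ) (v : Fin q → ℝ) (γ : ℝ) (hγ : 0 ≤ γ)
    (hf : ∀ α ∈ Set.Icc (0:ℝ) 1,
      f (x + α • d) ≤ f x + α * (c ⬝ᵥ d) + γ * α ^ 2 * (∑ i, (d i) ^ 2))
    (hh : ∀ α ∈ Set.Icc (0:ℝ) 1, ∀ j,
      |h (x + α • d) j - h x j - α * (Ah.mulVec d) j| ≤ γ * α ^ 2 * (∑ i, (d i) ^ 2))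
    (hg : ∀ α ∈ Set.Icc (0:ℝ) 1, ∀ j,
      |g (x + α • d) j - g x j - α * (Ag.mulVec d) j| ≤ γ * α ^ 2 * (∑ i, (d i) ^ 2))
    (hfeas : Ah.mulVec d + h x = 0)
    (gfeas : ∀ j, (Ag.mulVec d + g x) j ≥ 0)
    (hρ : ∀ j, 0 ≤ ρ j) (hv : ∀ j, 0 ≤ v j) :
    ∀ α ∈ Set.Icc (0:ℝ) 1,
      (f (x + α • d) + (∑ j, ρ j * |h (x + α • d) j|)
          + (∑ j, v j * max 0 (-(g (x + α • d) j))))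
        - (f x + (∑ j, ρ j * |h x j|) + (∑ j, v j * max 0 (-(g x j))))
      ≤ α * (c ⬝ᵥ d - (∑ j, ρ j * |h x j|) - (∑ j, v j * max 0 (-(g x j))))
        + (1 + (∑ j, ρ j) + (∑ j, v j)) * γ * α ^ 2 * (∑ i, (d i) ^ 2) := by
  intro α hα
  obtain ⟨hα0, hα1⟩ := hα
  set S : ℝ := ∑ i, (d i) ^ 2 with hS
  have hS0 : 0 ≤ S := Finset.sum_nonneg fun i _ => sq_nonneg _
  set E : ℝ := γ * α ^ 2 * S with hEdef
  have hE0 : 0 ≤ E := by positivity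
  -- bound for h terms
  have hhb : ∀ j, |h (x + α • d) j| ≤ (1 - α) * |h x j| + E := by
    intro j
    have hfj : Ah.mulVec d j = -(h x j) := by
      have := congrFun hfeas j
      simp at this; linarith
    have hb := hh α ⟨hα0, hα1⟩ j
    rw [hfj] at hb
    have : |h (x + α • d) j - (1 - α) * h x j| ≤ E := by
      have : h (x + α • d) j - h x j - α * -(h x j)
          = h (x + α • d) j - (1 - α) * h x j := by ring
      rwa [this] at hb
    calc |h (x + α • d) j|
        ≤ |(1 - α) * h x j| + |h (x + α • d) j - (1 - α) * h x j| := by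
          have := abs_add_le ((1 - α) * h x j) (h (x + α • d) j - (1 - α) * h x j)
          simpa using this
      _ ≤ (1 - α) * |h x j| + E := by
          rw [abs_mul, abs_of_nonneg (by linarith : (0:ℝ) ≤ 1 - α)]
          linarith
  -- bound for g terms
  have hgb : ∀ j, max 0 (-(g (x + α • d) j)) ≤ (1 - α) * max 0 (-(g x j)) + E := by
    intro j
    have hfj : -(g x j) ≤ Ag.mulVec d j := by
      have := gfeas j
      simp at this; linarith
    have hb := hg α ⟨hα0, hα1⟩ j
    have hlow : g (x + α • d) j ≥ g x j + α * Ag.mulVec d j - E := by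
      have := abs_le.mp hb
      linarith [this.1]
    have hmax0 : 0 ≤ max 0 (-(g x j)) := le_max_left _ _
    apply max_le
    · have h1α : (0:ℝ) ≤ 1 - α := by linarith
      exact add_nonneg (mul_nonneg h1α hmax0) hE0
    · have : -(g (x + α • d) j) ≤ (1 - α) * (-(g x j)) + E := by
        nlinarith [hfj, hlow]
      calc -(g (x + α • d) j) ≤ (1 - α) * (-(g x j)) + E := this
        _ ≤ (1 - α) * max 0 (-(g x j)) + E := by
            have h1 : -(g x j) ≤ max 0 (-(g x j)) := le_max_right _ _
            nlinarith
  have sumh : (∑ j, ρ j * |h (x + α • d) j|)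
      ≤ (1 - α) * (∑ j, ρ j * |h x j|) + (∑ j, ρ j) * E := by
    rw [Finset.mul_sum, Finset.sum_mul, ← Finset.sum_add_distrib]
    apply Finset.sum_le_sum
    intro j _
    have := mul_le_mul_of_nonneg_left (hhb j) (hρ j)
    nlinarith [this]
  have sumg : (∑ j, v j * max 0 (-(g (x + α • d) j)))
      ≤ (1 - α) * (∑ j, v j * max 0 (-(g x j))) + (∑ j, v j) * E := by
    rw [Finset.mul_sum, Finset.sum_mul, ← Finset.sum_add_distrib]
    apply Finset.sum_le_sum
    intro j _
    have := mul_le_mul_of_nonneg_left (hgb j) (hv j)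
    nlinarith [this]
  have hfb := hf α ⟨hα0, hα1⟩
  have goal : (f (x + α • d) + (∑ j, ρ j * |h (x + α • d) j|)
          + (∑ j, v j * max 0 (-(g (x + α • d) j))))
        - (f x + (∑ j, ρ j * |h x j|) + (∑ j, v j * max 0 (-(g x j))))
      ≤ α * (c ⬝ᵥ d - (∑ j, ρ j * |h x j|) - (∑ j, v j * max 0 (-(g x j))))
        + (1 + (∑ j, ρ j) + (∑ j, v j)) * E := by
    have : γ * α ^ 2 * S = E := rfl
    rw [this] at hfb
    linarith
  calc _ ≤ _ := goal
    _ = α * (c ⬝ᵥ d - (∑ j, ρ j * |h x j|) - (∑ j, v j * max 0 (-(g x j))))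
        + (1 + (∑ j, ρ j) + (∑ j, v j)) * γ * α ^ 2 * S := by rw [hEdef]; ring
end

section
/- Let F : ℝ → ℝ and, for j in finite index sets Fin p and Fin q, let H_j : ℝ → ℝ and G_j : ℝ → ℝ. Assume F has derivative c₀ at 0, each H_j has derivative −H_j(0) at 0, each G_j has derivative u_j at 0 with u_j ≥ −G_j(0), and ρ_j ≥ 0, v_j ≥ 0 for all j. Define φ(α) = F(α) + ∑_j ρ_j·|H_j(α)| + ∑_j v_j·max(0, −G_j(α)). Then limsup of (φ(α) − φ(0))/α as α → 0 from the right (along the filter 𝓝[>] 0) is at most c₀ − ∑_j ρ_j·|H_j(0)| − ∑_j v_j·max(0, −G_j(0)). -/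
open Filter Set

private lemma max0_lipschitz (a b : ℝ) : max 0 a ≤ max 0 b + |a - b| := by
  refine max_le (by positivity) ?_
  have h : a - b ≤ |a - b| := le_abs_self _
  have h2 : a ≤ b + |a - b| := by linarith
  exact h2.trans (by gcongr; exact le_max_right _ _)

private lemma slope_tendsto {f : ℝ → ℝ} {d : ℝ} (hf : HasDerivAt f d 0) :
    Tendsto (fun α : ℝ => (f α - f 0) / α) (nhdsWithin 0 (Set.Ioi 0)) (nhds d) := by
  have h := hasDerivAt_iff_tendsto_slope.mp hf
  have h2 := h.mono_left (nhdsWithin_mono 0 (fun x hx => ne_of_gt hx))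
  refine h2.congr fun α => ?_
  rw [slope_def_field, sub_zero]

/-- One-sided upper bound on the directional derivative of the ℓ1 merit function
along a direction satisfying the linearized constraints: the limsup of the right
difference quotient is at most `c₀ - ∑ ρ j·|H j 0| - ∑ v j·max(0, -G j 0)`. -/
theorem merit_limsup_difference_quotient_le
    {p q : ℕ} (F : ℝ → ℝ) (H : Fin p → ℝ → ℝ) (G : Fin q → ℝ → ℝ)
    (c₀ : ℝ) (u : Fin q → ℝ) (ρ : Fin p → ℝ) (v : Fin q → ℝ)
    (hF : HasDerivAt F c₀ 0)
    (hH : ∀ j, HasDerivAt (H j) (-(H j 0)) 0)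
    (hG : ∀ j, HasDerivAt (G j) (u j) 0)
    (hu : ∀ j, u j ≥ -(G j 0))
    (hρ : ∀ j, 0 ≤ ρ j) (hv : ∀ j, 0 ≤ v j) :
    Filter.limsup
        (fun α : ℝ =>
          ((F α + (∑ j, ρ j * |H j α|) + (∑ j, v j * max 0 (-(G j α))))
              - (F 0 + (∑ j, ρ j * |H j 0|) + (∑ j, v j * max 0 (-(G j 0))))) / α)
        (nhdsWithin 0 (Set.Ioi 0))
      ≤ c₀ - (∑ j, ρ j * |H j 0|) - (∑ j, v j * max 0 (-(G j 0))) := by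
  set l := nhdsWithin (0:ℝ) (Set.Ioi 0) with hl
  set ψ : ℝ → ℝ := fun α =>
      ((F α + (∑ j, ρ j * |H j α|) + (∑ j, v j * max 0 (-(G j α))))
          - (F 0 + (∑ j, ρ j * |H j 0|) + (∑ j, v j * max 0 (-(G j 0))))) / α with hψ
  set sF : ℝ → ℝ := fun α => (F α - F 0) / α with hsF
  set sH : Fin p → ℝ → ℝ := fun j α => (H j α - H j 0) / α with hsH
  set sG : Fin q → ℝ → ℝ := fun j α => (G j α - G j 0) / α with hsG
  set B : ℝ → ℝ := fun α => sF α + (∑ j, ρ j * (|sH j α + H j 0| - |H j 0|))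
      + (∑ j, v j * (|sG j α - u j| - max 0 (-(G j 0)))) with hB
  set L : ℝ → ℝ := fun α => sF α - (∑ j, ρ j * |sH j α|) - (∑ j, v j * |sG j α|) with hLdef
  -- the splitting identity, valid for α > 0
  have hsplit : ∀ α : ℝ, 0 < α → ψ α = sF α + (∑ j, ρ j * ((|H j α| - |H j 0|) / α))
      + (∑ j, v j * ((max 0 (-(G j α)) - max 0 (-(G j 0))) / α)) := by
    intro α hα0
    have hnum : (F α + (∑ j, ρ j * |H j α|) + (∑ j, v j * max 0 (-(G j α))))
        - (F 0 + (∑ j, ρ j * |H j 0|) + (∑ j, v j * max 0 (-(G j 0))))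
        = (F α - F 0) + (∑ j, ρ j * (|H j α| - |H j 0|))
          + (∑ j, v j * (max 0 (-(G j α)) - max 0 (-(G j 0)))) := by
      simp only [mul_sub, Finset.sum_sub_distrib]
      ring
    simp only [hψ, hsF, hnum, add_div, Finset.sum_div, mul_div_assoc]
  -- tendsto of B
  have hBt : Tendsto B l (nhds (c₀ - (∑ j, ρ j * |H j 0|) - (∑ j, v j * max 0 (-(G j 0))))) := by
    have h1 : Tendsto sF l (nhds c₀) := slope_tendsto hF
    have h2 : Tendsto (fun α => ∑ j, ρ j * (|sH j α + H j 0| - |H j 0|)) l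
        (nhds (∑ j, ρ j * (0 - |H j 0|))) := by
      refine tendsto_finset_sum _ fun j _ => ?_
      refine Tendsto.const_mul _ (Tendsto.sub_const ?_ _)
      have := ((slope_tendsto (hH j)).add_const (H j 0)).abs
      simpa using this
    have h3 : Tendsto (fun α => ∑ j, v j * (|sG j α - u j| - max 0 (-(G j 0)))) l
        (nhds (∑ j, v j * (0 - max 0 (-(G j 0))))) := by
      refine tendsto_finset_sum _ fun j _ => ?_
      refine Tendsto.const_mul _ (Tendsto.sub_const ?_ _)
      have := ((slope_tendsto (hG j)).sub_const (u j)).abs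
      simpa using this
    have htot := (h1.add h2).add h3
    have heq : c₀ + (∑ j, ρ j * (0 - |H j 0|)) + (∑ j, v j * (0 - max 0 (-(G j 0))))
        = c₀ - (∑ j, ρ j * |H j 0|) - (∑ j, v j * max 0 (-(G j 0))) := by
      simp only [zero_sub, mul_neg, Finset.sum_neg_distrib]
      ring
    rw [← heq]
    exact htot
  -- eventual bound ψ ≤ B
  have hmem : Set.Ioc (0:ℝ) 1 ∈ l := Ioc_mem_nhdsGT one_pos
  have hψB : ∀ᶠ α in l, ψ α ≤ B α := by
    filter_upwards [hmem] with α hα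
    obtain ⟨hα0, hα1⟩ := hα
    have hαne : α ≠ 0 := ne_of_gt hα0
    rw [hsplit α hα0]
    simp only [hB]
    gcongr with j hj j hj
    · exact hρ j
    · rw [div_le_iff₀ hα0]
      have key : |H j α| ≤ |H j α - (1 - α) * H j 0| + (1 - α) * |H j 0| := by
        have h := abs_add_le (H j α - (1 - α) * H j 0) ((1 - α) * H j 0)
        simp only [sub_add_cancel] at h
        calc |H j α| ≤ |H j α - (1 - α) * H j 0| + |(1 - α) * H j 0| := h
          _ = |H j α - (1 - α) * H j 0| + (1 - α) * |H j 0| := by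
              rw [abs_mul, abs_of_nonneg (show (0:ℝ) ≤ 1 - α by linarith)]
      have heq : |H j α - (1 - α) * H j 0| = |sH j α + H j 0| * α := by
        simp only [hsH]
        rw [show (H j α - H j 0) / α + H j 0 = (H j α - (1 - α) * H j 0) / α by
          field_simp; ring]
        rw [abs_div, abs_of_pos hα0, div_mul_cancel₀ _ hαne]
      nlinarith [abs_nonneg (H j 0)]
    · exact hv j
    · rw [div_le_iff₀ hα0]
      have lip := max0_lipschitz (-(G j α)) (-(G j 0) - α * u j)
      have mono : max 0 (-(G j 0) - α * u j) ≤ (1 - α) * max 0 (-(G j 0)) := by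
        have h1 : -(G j 0) - α * u j ≤ (1 - α) * (-(G j 0)) := by
          have := hu j; nlinarith
        calc max 0 (-(G j 0) - α * u j) ≤ max 0 ((1 - α) * (-(G j 0))) :=
              max_le_max le_rfl h1
          _ = (1 - α) * max 0 (-(G j 0)) := by
              rw [mul_max_of_nonneg _ _ (by linarith : (0:ℝ) ≤ 1 - α), mul_zero]
      have heq : |-(G j α) - (-(G j 0) - α * u j)| = |sG j α - u j| * α := by
        rw [show -(G j α) - (-(G j 0) - α * u j) = -(G j α - G j 0 - α * u j) by ring,
          abs_neg]
        simp only [hsG]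
        rw [show (G j α - G j 0) / α - u j = (G j α - G j 0 - α * u j) / α by
          field_simp]
        rw [abs_div, abs_of_pos hα0, div_mul_cancel₀ _ hαne]
      nlinarith [le_max_left (0:ℝ) (-(G j 0))]
  -- cobounded below
  have hLt : Tendsto L l (nhds (c₀ - (∑ j, ρ j * |(-(H j 0))|) - (∑ j, v j * |u j|))) := by
    refine Tendsto.sub (Tendsto.sub (slope_tendsto hF) ?_) ?_
    · exact tendsto_finset_sum _ fun j _ => Tendsto.const_mul _ (slope_tendsto (hH j)).abs
    · exact tendsto_finset_sum _ fun j _ => Tendsto.const_mul _ (slope_tendsto (hG j)).abs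
  have hLψ : ∀ᶠ α in l, L α ≤ ψ α := by
    filter_upwards [self_mem_nhdsWithin] with α hα
    have hα0 : (0:ℝ) < α := hα
    rw [hsplit α hα0]
    have hLeq : L α = sF α + (∑ j, ρ j * (-|sH j α|)) + (∑ j, v j * (-|sG j α|)) := by
      simp only [hLdef, mul_neg, Finset.sum_neg_distrib, sub_eq_add_neg]
    rw [hLeq]
    gcongr with j hj j hj
    · exact hρ j
    · rw [le_div_iff₀ hα0]
      have h2 : |sH j α| * α = |H j α - H j 0| := by
        simp only [hsH]
        rw [abs_div, abs_of_pos hα0, div_mul_cancel₀ _ (ne_of_gt hα0)]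
      have h1 : |H j 0| - |H j α| ≤ |H j α - H j 0| := by
        have := abs_sub_abs_le_abs_sub (H j 0) (H j α)
        rw [abs_sub_comm] at this; linarith
      nlinarith
    · exact hv j
    · rw [le_div_iff₀ hα0]
      have h2 : |sG j α| * α = |G j α - G j 0| := by
        simp only [hsG]
        rw [abs_div, abs_of_pos hα0, div_mul_cancel₀ _ (ne_of_gt hα0)]
      have h1 : max 0 (-(G j 0)) - max 0 (-(G j α)) ≤ |G j α - G j 0| := by
        have hlip := max0_lipschitz (-(G j 0)) (-(G j α))
        have habs : |-(G j 0) - -(G j α)| = |G j α - G j 0| := by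
          rw [show -(G j 0) - -(G j α) = G j α - G j 0 by ring]
        linarith [habs ▸ hlip]
      nlinarith
  have hcob : IsCoboundedUnder (· ≤ ·) l ψ := by
    set L₀ := c₀ - (∑ j, ρ j * |(-(H j 0))|) - (∑ j, v j * |u j|) with hL₀
    have hLlb : ∀ᶠ α in l, L₀ - 1 ≤ L α :=
      hLt.eventually (eventually_ge_nhds (by linarith))
    refine isCoboundedUnder_le_of_eventually_le l (x := L₀ - 1) ?_
    filter_upwards [hLlb, hLψ] with α h1 h2
    linarith
  calc Filter.limsup ψ l ≤ Filter.limsup B l :=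
        limsup_le_limsup hψB hcob hBt.isBoundedUnder_le
    _ = _ := hBt.limsup_eq
end

section
/- Let F : ℝ → ℝ and, for j in a finite index set Fin p, let H_j : ℝ → ℝ. Assume F has derivative c₀ at 0, each H_j has derivative −H_j(0) at 0, and ρ_j ≥ 0 for all j. Define φ(α) = F(α) + ∑_j ρ_j·|H_j(α)|. Then the difference quotient (φ(α) − φ(0))/α tends, as α → 0 from the right (along 𝓝[>] 0), to c₀ − ∑_j ρ_j·|H_j(0)|; i.e. the one-sided directional derivative of the equality-constrained ℓ1 merit function along the SQP direction exists and equals c₀ − ∑_j ρ_j·|H_j(0)|. -/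
open Filter Set

/-- If `g` has derivative `-(g 0)` at `0`, the right difference quotient of `|g|`
tends to `-|g 0|`. -/
lemma abs_slope_tendsto (g : ℝ → ℝ) (hg : HasDerivAt g (-(g 0)) 0) :
    Tendsto (fun α : ℝ => (|g α| - |g 0|) / α) (nhdsWithin 0 (Set.Ioi 0))
      (nhds (-|g 0|)) := by
  have hslope : Tendsto (fun α : ℝ => (g α - g 0) / α) (nhdsWithin 0 (Set.Ioi 0))
      (nhds (-(g 0))) := by
    have h := hg.hasDerivWithinAt (s := Set.Ioi 0)
    rw [hasDerivWithinAt_iff_tendsto_slope] at h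
    have hsub : nhdsWithin (0:ℝ) (Set.Ioi 0 \ {0}) = nhdsWithin 0 (Set.Ioi 0) := by
      congr 1
      ext x
      simp only [Set.mem_diff, Set.mem_Ioi, Set.mem_singleton_iff]
      exact ⟨fun h => h.1, fun h => ⟨h, ne_of_gt h⟩⟩
    rw [hsub] at h
    have : (slope g 0) = fun α : ℝ => (g α - g 0) / α := by
      funext α; rw [slope_def_field]; ring_nf
    rwa [this] at h
  have h0 : Tendsto (fun α : ℝ => (g α - g 0) / α + g 0) (nhdsWithin 0 (Set.Ioi 0))
      (nhds 0) := by simpa using hslope.add_const (g 0)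
  have hIoo : Set.Ioo (0:ℝ) 1 ∈ nhdsWithin (0:ℝ) (Set.Ioi 0) :=
    Ioo_mem_nhdsGT_of_mem (by norm_num : (0:ℝ) ∈ Set.Ico (0:ℝ) 1)
  have hf : Tendsto (fun α : ℝ => (|g α| - (1 - α) * |g 0|) / α)
      (nhdsWithin 0 (Set.Ioi 0)) (nhds 0) := by
    apply squeeze_zero_norm' _ (by simpa using h0.norm)
    filter_upwards [hIoo] with α hα
    obtain ⟨h1, h2⟩ := hα
    rw [Real.norm_eq_abs, abs_div, abs_of_pos h1, div_le_iff₀ h1]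
    have e1 : |(1 - α) * g 0| = (1 - α) * |g 0| := by
      rw [abs_mul, abs_of_pos (show (0:ℝ) < 1 - α by linarith)]
    calc |(|g α| - (1 - α) * |g 0|)| = |(|g α| - |(1 - α) * g 0|)| := by rw [e1]
      _ ≤ |g α - (1 - α) * g 0| := abs_abs_sub_abs_le_abs_sub _ _
      _ = |((g α - g 0) / α + g 0) * α| := by
          congr 1
          field_simp
          ring
      _ = |(g α - g 0) / α + g 0| * α := by rw [abs_mul, abs_of_pos h1]
  have := hf.add_const (-|g 0|)
  rw [zero_add] at this
  apply this.congr'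
  filter_upwards [hIoo] with α hα
  have hα' : α ≠ 0 := ne_of_gt hα.1
  field_simp
  ring

/-- The one-sided directional derivative of the equality-constrained ℓ1 merit
function along the SQP direction exists and equals `c₀ - ∑ ρ j·|H j 0|`. -/
theorem merit_one_sided_directional_derivative
    {p : ℕ} (F : ℝ → ℝ) (H : Fin p → ℝ → ℝ)
    (c₀ : ℝ) (ρ : Fin p → ℝ)
    (hF : HasDerivAt F c₀ 0)
    (hH : ∀ j, HasDerivAt (H j) (-(H j 0)) 0)
    (hρ : ∀ j, 0 ≤ ρ j) :
    Filter.Tendsto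
      (fun α : ℝ =>
        ((F α + (∑ j, ρ j * |H j α|)) - (F 0 + (∑ j, ρ j * |H j 0|))) / α)
      (nhdsWithin 0 (Set.Ioi 0))
      (nhds (c₀ - (∑ j, ρ j * |H j 0|))) := by
  have hFs : Tendsto (fun α : ℝ => (F α - F 0) / α) (nhdsWithin 0 (Set.Ioi 0))
      (nhds c₀) := by
    have h := hF.hasDerivWithinAt (s := Set.Ioi 0)
    rw [hasDerivWithinAt_iff_tendsto_slope] at h
    have hsub : nhdsWithin (0:ℝ) (Set.Ioi 0 \ {0}) = nhdsWithin 0 (Set.Ioi 0) := by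
      congr 1
      ext x
      simp only [Set.mem_diff, Set.mem_Ioi, Set.mem_singleton_iff]
      exact ⟨fun h => h.1, fun h => ⟨h, ne_of_gt h⟩⟩
    rw [hsub] at h
    have : (slope F 0) = fun α : ℝ => (F α - F 0) / α := by
      funext α; rw [slope_def_field]; ring_nf
    rwa [this] at h
  have hsum : Tendsto (fun α : ℝ => ∑ j, ρ j * ((|H j α| - |H j 0|) / α))
      (nhdsWithin 0 (Set.Ioi 0)) (nhds (∑ j, ρ j * (-|H j 0|))) :=
    tendsto_finset_sum _ fun j _ =>
      (abs_slope_tendsto (H j) (hH j)).const_mul (ρ j)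
  have htot := hFs.add hsum
  have hval : c₀ + ∑ j, ρ j * (-|H j 0|) = c₀ - ∑ j, ρ j * |H j 0| := by
    simp [mul_neg, sub_eq_add_neg]
  rw [hval] at htot
  apply htot.congr'
  filter_upwards [self_mem_nhdsWithin] with α (hα : 0 < α)
  have hα' : α ≠ 0 := ne_of_gt hα
  rw [show ∑ j, ρ j * ((|H j α| - |H j 0|) / α)
      = ((∑ j, ρ j * |H j α|) - ∑ j, ρ j * |H j 0|) / α by
    rw [← Finset.sum_sub_distrib, Finset.sum_div]
    exact Finset.sum_congr rfl fun j _ => by ring]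
  rw [← add_div]
  congr 1
  ring
end

section
/- Let x, d : Fin n → ℝ with d ≠ 0, let f : (Fin n → ℝ) → ℝ, h : (Fin n → ℝ) → (Fin p → ℝ), g : (Fin n → ℝ) → (Fin q → ℝ). Suppose: (i) B is positive definite and the KKT conditions of the SQP QP subproblem hold with current constraint values h(x) and g(x); (ii) ρ_j ≥ |λ_j| and v_j ≥ μ_j for all j; (iii) along the line, the functions α ↦ f(x + α•d), α ↦ h_j(x + α•d), α ↦ g_j(x + α•d) have derivatives at 0 equal to c ⬝ᵥ d, (A_h.mulVec d)_j and (A_g.mulVec d)_j respectively. Then d is a strict descent direction for the ℓ1 merit function: there exists α₀ > 0 such that for all α ∈ (0, α₀), φ1(x + α•d) < φ1(x). -/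
open Matrix Set Filter Asymptotics

lemma abs_hasDerivAt_zero {u : ℝ → ℝ} (hu : HasDerivAt u 0 0) (h0 : u 0 = 0) :
    HasDerivAt (fun α => |u α|) 0 0 := by
  rw [hasDerivAt_iff_isLittleO] at hu ⊢
  simp only [sub_zero, smul_zero, h0, abs_zero] at hu ⊢
  exact hu.abs_left

lemma max_hasDerivAt_zero {u : ℝ → ℝ} (hu : HasDerivAt u 0 0) (h0 : u 0 = 0) :
    HasDerivAt (fun α => max 0 (-u α)) 0 0 := by
  rw [hasDerivAt_iff_isLittleO] at hu ⊢
  simp only [sub_zero, smul_zero, h0, neg_zero, max_self] at hu ⊢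
  refine IsBigO.trans_isLittleO (g := u) ?_ hu
  refine IsBigO.of_bound' ?_
  filter_upwards with α
  rw [Real.norm_eq_abs, Real.norm_eq_abs, abs_of_nonneg (le_max_left _ _)]
  exact max_le (abs_nonneg _) (neg_le_abs _)

lemma eventually_pos_right {u : ℝ → ℝ} {s : ℝ} (hu : HasDerivAt u s 0) (h0 : u 0 = 0)
    (hs : 0 < s) : ∀ᶠ α in nhdsWithin (0:ℝ) (Ioi 0), 0 < u α := by
  have h1 := (hu.hasDerivWithinAt (s := Ioi 0))
  rw [hasDerivWithinAt_iff_tendsto_slope, Set.diff_singleton_eq_self (by simp)] at h1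
  have hev : ∀ᶠ α in nhdsWithin (0:ℝ) (Ioi 0), 0 < slope u 0 α :=
    h1.eventually (eventually_gt_nhds hs)
  filter_upwards [hev, self_mem_nhdsWithin] with α h1 h2
  have hα : (0:ℝ) < α := h2
  have hslope : slope u 0 α = u α / α := by simp [slope_def_field, h0]
  rw [hslope] at h1
  rcases div_pos_iff.mp h1 with ⟨h, _⟩ | ⟨_, h⟩
  · exact h
  · linarith

lemma descent_of_hasDerivWithinAt {φ : ℝ → ℝ} {D : ℝ}
    (hφ : HasDerivWithinAt φ D (Ici 0) 0) (hD : D < 0) :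
    ∃ α₀ > (0:ℝ), ∀ α ∈ Ioo (0:ℝ) α₀, φ α < φ 0 := by
  rw [hasDerivWithinAt_iff_tendsto_slope] at hφ
  have h1 : Ici (0:ℝ) \ {0} = Ioi 0 := by
    ext y; simp [lt_iff_le_and_ne, eq_comm]
  rw [h1] at hφ
  have hev : ∀ᶠ α in nhdsWithin (0:ℝ) (Ioi 0), slope φ 0 α < 0 :=
    hφ.eventually (eventually_lt_nhds hD)
  have hev2 : ∀ᶠ α in nhdsWithin (0:ℝ) (Ioi 0), φ α < φ 0 := by
    filter_upwards [hev, self_mem_nhdsWithin] with α h1 h2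
    have hα : (0:ℝ) < α := h2
    have hslope : slope φ 0 α = (φ α - φ 0) / α := by simp [slope_def_field]
    rw [hslope] at h1
    rcases div_neg_iff.mp h1 with ⟨_, h⟩ | ⟨h, _⟩
    · linarith
    · linarith
  obtain ⟨α₀, hα₀, hsub⟩ := mem_nhdsGT_iff_exists_Ioo_subset.mp hev2
  exact ⟨α₀, hα₀, fun α hα => hsub hα⟩

/-- If the KKT conditions of the SQP QP subproblem hold at `x` with `B` positive
definite, the penalties dominate the multipliers, and the objective/constraint
functions are differentiable along the line `α ↦ x + α • d` with the stated
derivatives, then `d ≠ 0` is a strict descent direction for the ℓ1 merit function. -/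
theorem sqp_direction_is_descent_direction
    {n p q : ℕ} (x d : Fin n → ℝ) (hd : d ≠ 0)
    (f : (Fin n → ℝ) → ℝ) (h : (Fin n → ℝ) → Fin p → ℝ) (g : (Fin n → ℝ) → Fin q → ℝ)
    (B : Matrix (Fin n) (Fin n) ℝ) (c : Fin n → ℝ)
    (Ah : Matrix (Fin p) (Fin n) ℝ) (Ag : Matrix (Fin q) (Fin n) ℝ)
    (lam : Fin p → ℝ) (mu : Fin q → ℝ) (ρ : Fin p → ℝ) (v : Fin q → ℝ)
    (hB : B.PosDef)
    (hstat : B.mulVec d + c + Ah.transpose.mulVec lam - Ag.transpose.mulVec mu = 0)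
    (hfeas : Ah.mulVec d + h x = 0)
    (gfeas : ∀ j, (Ag.mulVec d + g x) j ≥ 0)
    (hdual : ∀ j, mu j ≥ 0)
    (hcomp : mu ⬝ᵥ (Ag.mulVec d + g x) = 0)
    (hρ : ∀ j, ρ j ≥ |lam j|) (hv : ∀ j, v j ≥ mu j)
    (hf : HasDerivAt (fun α : ℝ => f (x + α • d)) (c ⬝ᵥ d) 0)
    (hh : ∀ j, HasDerivAt (fun α : ℝ => h (x + α • d) j) (Ah.mulVec d j) 0)
    (hg : ∀ j, HasDerivAt (fun α : ℝ => g (x + α • d) j) (Ag.mulVec d j) 0) :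
    ∃ α₀ > (0:ℝ), ∀ α ∈ Set.Ioo (0:ℝ) α₀,
      f (x + α • d) + (∑ j, ρ j * |h (x + α • d) j|)
          + (∑ j, v j * max 0 (-(g (x + α • d) j)))
        < f x + (∑ j, ρ j * |h x j|) + (∑ j, v j * max 0 (-(g x j))) := by
  classical
  have hAhd : ∀ j, Ah.mulVec d j = -(h x j) := by
    intro j
    have h1 := congrFun hfeas j
    simp only [Pi.add_apply, Pi.zero_apply] at h1
    linarith
  have hvpos : ∀ j, 0 ≤ v j := fun j => le_trans (hdual j) (hv j)
  -- derivatives of the equality-penalty terms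
  have Hh : ∀ j : Fin p, HasDerivAt (fun α : ℝ => ρ j * |h (x + α • d) j|)
      (ρ j * (-|h x j|)) 0 := by
    intro j
    have hu : HasDerivAt (fun α : ℝ => h (x + α • d) j) (Ah.mulVec d j) 0 := hh j
    have hu0 : h (x + (0:ℝ) • d) j = h x j := by simp
    have key : HasDerivAt (fun α : ℝ => |h (x + α • d) j|) (-|h x j|) 0 := by
      rcases lt_trichotomy (h x j) 0 with hx0 | hx0 | hx0
      · have hev : ∀ᶠ α in nhds (0:ℝ), h (x + α • d) j < 0 :=
          hu.continuousAt.eventually (eventually_lt_nhds (by simpa using hx0))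
        have h2 : HasDerivAt (fun α : ℝ => |h (x + α • d) j|) (-(Ah.mulVec d j)) 0 :=
          hu.neg.congr_of_eventuallyEq (hev.mono fun α hα => abs_of_neg hα)
        rw [hAhd j, abs_of_neg hx0] at *
        exact h2
      · have hAd : Ah.mulVec d j = 0 := by rw [hAhd j, hx0, neg_zero]
        rw [hAd] at hu
        have h2 := abs_hasDerivAt_zero hu (by simp [hx0])
        simpa [hx0] using h2
      · have hev : ∀ᶠ α in nhds (0:ℝ), 0 < h (x + α • d) j :=
          hu.continuousAt.eventually (eventually_gt_nhds (by simpa using hx0))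
        have h2 : HasDerivAt (fun α : ℝ => |h (x + α • d) j|) (Ah.mulVec d j) 0 :=
          hu.congr_of_eventuallyEq (hev.mono fun α hα => abs_of_pos hα)
        rw [hAhd j] at h2
        rw [abs_of_pos hx0]
        exact h2
    exact key.const_mul (ρ j)
  -- derivatives (within Ici 0) of the inequality-penalty terms
  have Hg : ∀ j : Fin q, ∃ D : ℝ,
      HasDerivWithinAt (fun α : ℝ => v j * max 0 (-(g (x + α • d) j))) D (Set.Ici 0) 0
      ∧ D ≤ v j * (-(max 0 (-(g x j)))) := by
    intro j
    have hu : HasDerivAt (fun α : ℝ => g (x + α • d) j) (Ag.mulVec d j) 0 := hg j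
    have hu0 : g (x + (0:ℝ) • d) j = g x j := by simp
    have hsj : 0 ≤ Ag.mulVec d j + g x j := gfeas j
    rcases lt_trichotomy (g x j) 0 with hx0 | hx0 | hx0
    · refine ⟨v j * (-(Ag.mulVec d j)), ?_, ?_⟩
      · have hev : ∀ᶠ α in nhds (0:ℝ), g (x + α • d) j < 0 :=
          hu.continuousAt.eventually (eventually_lt_nhds (by simpa using hx0))
        have h2 : HasDerivAt (fun α : ℝ => max 0 (-(g (x + α • d) j))) (-(Ag.mulVec d j)) 0 :=
          hu.neg.congr_of_eventuallyEq (hev.mono fun α hα =>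
            max_eq_right (by linarith : (0:ℝ) ≤ -(g (x + α • d) j)))
        exact (h2.const_mul (v j)).hasDerivWithinAt
      · rw [max_eq_right (by linarith : (0:ℝ) ≤ -(g x j)), neg_neg]
        exact mul_le_mul_of_nonneg_left (by linarith : -(Ag.mulVec d j) ≤ g x j) (hvpos j)
    · have hAd0 : (0:ℝ) ≤ Ag.mulVec d j := by rw [hx0] at hsj; linarith
      rcases eq_or_lt_of_le hAd0 with hAd | hAd
      · refine ⟨0, ?_, by simp [hx0]⟩
        rw [← hAd] at hu
        have h2 := max_hasDerivAt_zero hu (by simp [hx0])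
        have h3 := h2.const_mul (v j)
        simpa using h3.hasDerivWithinAt
      · refine ⟨0, ?_, by simp [hx0]⟩
        have hev := eventually_pos_right hu (by simp [hx0]) hAd
        obtain ⟨b, hb, hsub⟩ := mem_nhdsGT_iff_exists_Ioo_subset.mp hev
        have hmem : Set.Ico (0:ℝ) b ∈ nhdsWithin (0:ℝ) (Set.Ici 0) :=
          Ico_mem_nhdsGE hb
        have hEq : (fun α : ℝ => v j * max 0 (-(g (x + α • d) j)))
            =ᶠ[nhdsWithin (0:ℝ) (Set.Ici 0)] fun _ => 0 := by
          filter_upwards [hmem] with α hα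
          rcases eq_or_lt_of_le hα.1 with h' | h'
          · simp [← h', hu0, hx0]
          · have hpos : 0 < g (x + α • d) j := hsub ⟨h', hα.2⟩
            simp [max_eq_left (by linarith : -(g (x + α • d) j) ≤ 0)]
        exact (hasDerivWithinAt_const 0 _ 0).congr_of_eventuallyEq hEq (by simp [hu0, hx0])
    · refine ⟨0, ?_, by simp [max_eq_left (by linarith : -(g x j) ≤ 0)]⟩
      have hev : ∀ᶠ α in nhds (0:ℝ), 0 < g (x + α • d) j :=
        hu.continuousAt.eventually (eventually_gt_nhds (by simpa using hx0))
      have h2 : HasDerivAt (fun α : ℝ => v j * max 0 (-(g (x + α • d) j))) 0 0 :=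
        (hasDerivAt_const (0:ℝ) (0:ℝ)).congr_of_eventuallyEq (hev.mono fun α hα => by
          simp [max_eq_left (by linarith : -(g (x + α • d) j) ≤ 0)])
      exact h2.hasDerivWithinAt
  choose Dg hDg hDgle using Hg
  have Hsum_h : HasDerivWithinAt (fun α : ℝ => ∑ j, ρ j * |h (x + α • d) j|)
      (∑ j, ρ j * (-|h x j|)) (Set.Ici 0) 0 :=
    HasDerivWithinAt.fun_sum fun j _ => (Hh j).hasDerivWithinAt
  have Hsum_g : HasDerivWithinAt (fun α : ℝ => ∑ j, v j * max 0 (-(g (x + α • d) j)))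
      (∑ j, Dg j) (Set.Ici 0) 0 :=
    HasDerivWithinAt.fun_sum fun j _ => hDg j
  have Hφ : HasDerivWithinAt
      (fun α : ℝ => f (x + α • d) + (∑ j, ρ j * |h (x + α • d) j|)
          + (∑ j, v j * max 0 (-(g (x + α • d) j))))
      (c ⬝ᵥ d + (∑ j, ρ j * (-|h x j|)) + ∑ j, Dg j) (Set.Ici 0) 0 :=
    (hf.hasDerivWithinAt.add Hsum_h).add Hsum_g
  -- the derivative is negative
  have hBd : 0 < d ⬝ᵥ B.mulVec d := by
    have h1 := hB.dotProduct_mulVec_pos hd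
    simpa using h1
  have hcd : c ⬝ᵥ d = -(d ⬝ᵥ B.mulVec d) + (∑ j, lam j * h x j) - (∑ j, mu j * g x j) := by
    have h1 := congrArg (fun y => y ⬝ᵥ d) hstat
    simp only [add_dotProduct, sub_dotProduct, zero_dotProduct] at h1
    rw [mulVec_transpose, mulVec_transpose, ← dotProduct_mulVec, ← dotProduct_mulVec,
      dotProduct_comm (B.mulVec d) d] at h1
    have h2 : lam ⬝ᵥ Ah.mulVec d = -(∑ j, lam j * h x j) := by
      simp only [dotProduct]
      rw [← Finset.sum_neg_distrib]
      exact Finset.sum_congr rfl fun j _ => by rw [hAhd j]; ring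
    have h3 : mu ⬝ᵥ Ag.mulVec d = -(∑ j, mu j * g x j) := by
      rw [dotProduct_add] at hcomp
      have h4 : mu ⬝ᵥ g x = ∑ j, mu j * g x j := rfl
      linarith
    rw [h2, h3] at h1
    linarith
  have hD : c ⬝ᵥ d + (∑ j, ρ j * (-|h x j|)) + (∑ j, Dg j) < 0 := by
    have hA : ∑ j, lam j * h x j ≤ ∑ j, ρ j * |h x j| := by
      refine Finset.sum_le_sum fun j _ => le_trans (le_abs_self _) ?_
      rw [abs_mul]
      exact mul_le_mul_of_nonneg_right (hρ j) (abs_nonneg _)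
    have hBsum : ∑ j, Dg j ≤ ∑ j, mu j * g x j := by
      refine Finset.sum_le_sum fun j _ => le_trans (hDgle j) ?_
      have h1 : v j * (-(max 0 (-(g x j)))) ≤ mu j * (-(max 0 (-(g x j)))) :=
        mul_le_mul_of_nonpos_right (hv j) (neg_nonpos.mpr (le_max_left _ _))
      have h2 : mu j * (-(max 0 (-(g x j)))) ≤ mu j * g x j :=
        mul_le_mul_of_nonneg_left (by
          have := le_max_right (0:ℝ) (-(g x j)); linarith) (hdual j)
      linarith
    have e1 : (∑ j, ρ j * (-|h x j|)) = -(∑ j, ρ j * |h x j|) := by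
      rw [← Finset.sum_neg_distrib]
      exact Finset.sum_congr rfl fun j _ => by ring
    rw [hcd, e1]
    linarith
  obtain ⟨α₀, hα₀, hlt⟩ := descent_of_hasDerivWithinAt Hφ hD
  refine ⟨α₀, hα₀, fun α hα => ?_⟩
  have h1 := hlt α hα
  simpa using h1
end

section
/- Let δ > 0, let Q : Matrix (Fin n) (Fin n) ℝ be orthogonal (Q * Qᵀ = 1), and let σ : Fin n → ℝ. Define H = Q * Matrix.diagonal σ * Qᵀ and E = Q * Matrix.diagonal (fun i => max 0 (δ − σ i)) * Qᵀ. Then E is the minimum modification under the Frobenius norm: for every symmetric matrix E' : Matrix (Fin n) (Fin n) ℝ such that H + E' − δ • (1 : Matrix (Fin n) (Fin n) ℝ) is positive semidefinite, one has √(∑_i ∑_j (E i j)²) ≤ √(∑_i ∑_j (E' i j)²). -/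
open Matrix

lemma frob_eq_trace {n : ℕ} (A : Matrix (Fin n) (Fin n) ℝ) :
    ∑ i, ∑ j, (A i j) ^ 2 = (Aᵀ * A).trace := by
  simp [Matrix.trace, Matrix.diag, Matrix.mul_apply, sq]
  rw [Finset.sum_comm]

lemma psd_diag_nonneg {n : ℕ} {M : Matrix (Fin n) (Fin n) ℝ}
    (hM : M.PosSemidef) (i : Fin n) : 0 ≤ M i i := by
  have := hM.dotProduct_mulVec_nonneg (Pi.single i 1)
  simpa [dotProduct, Matrix.mulVec, Pi.single_apply, Finset.sum_ite_eq,
    Finset.sum_ite_eq'] using this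

/-- The eigenvalue-modification `E = Q diag(max 0 (δ - σ)) Qᵀ` is the minimum
modification under the Frobenius norm: any symmetric `E'` such that
`H + E' - δ·I` is positive semidefinite has Frobenius norm at least that of `E`. -/
theorem modified_hessian_min_frobenius
    {n : ℕ} (δ : ℝ) (hδ : 0 < δ) (Q : Matrix (Fin n) (Fin n) ℝ)
    (hQ : Q * Q.transpose = 1) (σ : Fin n → ℝ)
    (E' : Matrix (Fin n) (Fin n) ℝ) (hE'sym : E'.IsSymm)
    (hpsd : (Q * Matrix.diagonal σ * Q.transpose + E'
        - δ • (1 : Matrix (Fin n) (Fin n) ℝ)).PosSemidef) :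
    Real.sqrt (∑ i, ∑ j,
        ((Q * Matrix.diagonal (fun i => max 0 (δ - σ i)) * Q.transpose) i j) ^ 2)
      ≤ Real.sqrt (∑ i, ∑ j, (E' i j) ^ 2) := by
  have hQ' : Qᵀ * Q = 1 := mul_eq_one_comm.mp hQ
  set τ : Fin n → ℝ := fun i => max 0 (δ - σ i) with hτ
  set F : Matrix (Fin n) (Fin n) ℝ := Qᵀ * E' * Q with hF
  apply Real.sqrt_le_sqrt
  -- Frobenius norm of E equals ∑ τ i ^ 2
  have hE : ∑ i, ∑ j, ((Q * Matrix.diagonal τ * Qᵀ) i j) ^ 2 = ∑ i, (τ i) ^ 2 := by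
    rw [frob_eq_trace]
    have : (Q * Matrix.diagonal τ * Qᵀ)ᵀ * (Q * Matrix.diagonal τ * Qᵀ)
        = Q * (Matrix.diagonal τ * Matrix.diagonal τ) * Qᵀ := by
      simp only [Matrix.transpose_mul, Matrix.transpose_transpose,
        Matrix.diagonal_transpose, Matrix.mul_assoc]
      rw [← Matrix.mul_assoc Qᵀ Q, hQ', Matrix.one_mul]
    rw [this, Matrix.trace_mul_cycle, ← Matrix.mul_assoc, hQ', Matrix.one_mul,
      Matrix.diagonal_mul_diagonal]
    simp [Matrix.trace, sq]
  -- Frobenius norm of E' equals Frobenius norm of F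
  have hE'F : ∑ i, ∑ j, (E' i j) ^ 2 = ∑ i, ∑ j, (F i j) ^ 2 := by
    rw [frob_eq_trace, frob_eq_trace]
    have : Fᵀ * F = Qᵀ * (E'ᵀ * E') * Q := by
      simp only [hF, Matrix.transpose_mul, Matrix.transpose_transpose]
      simp only [Matrix.mul_assoc]
      rw [← Matrix.mul_assoc Q Qᵀ, hQ, Matrix.one_mul]
    rw [this, Matrix.trace_mul_cycle, ← Matrix.mul_assoc, hQ, Matrix.one_mul]
  -- PSD of diag σ + F - δ•1
  have hMpsd : (Matrix.diagonal σ + F - δ • (1 : Matrix (Fin n) (Fin n) ℝ)).PosSemidef := by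
    have h1 := hpsd.conjTranspose_mul_mul_same Q
    have heq : Qᴴ * (Q * Matrix.diagonal σ * Qᵀ + E'
        - δ • (1 : Matrix (Fin n) (Fin n) ℝ)) * Q
        = Matrix.diagonal σ + F - δ • (1 : Matrix (Fin n) (Fin n) ℝ) := by
      have e1 : Qᵀ * (Q * Matrix.diagonal σ * Qᵀ) * Q = Matrix.diagonal σ := by
        simp only [Matrix.mul_assoc]
        rw [hQ', Matrix.mul_one, ← Matrix.mul_assoc, hQ', Matrix.one_mul]
      have e3 : Qᵀ * (δ • (1 : Matrix (Fin n) (Fin n) ℝ)) * Q = δ • 1 := by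
        rw [Matrix.mul_smul, Matrix.mul_one, Matrix.smul_mul, hQ']
      rw [Matrix.conjTranspose_eq_transpose_of_trivial]
      simp only [Matrix.mul_sub, Matrix.sub_mul, Matrix.mul_add, Matrix.add_mul, e1, e3]
      rfl
    rwa [heq] at h1
  -- diagonal entries: τ i ^ 2 ≤ F i i ^ 2
  have hdiag : ∀ i, τ i ^ 2 ≤ F i i ^ 2 := by
    intro i
    have h0 := psd_diag_nonneg hMpsd i
    simp only [Matrix.sub_apply, Matrix.add_apply, Matrix.diagonal_apply_eq,
      Matrix.smul_apply, Matrix.one_apply_eq, smul_eq_mul, mul_one] at h0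
    rcases le_or_gt (δ - σ i) 0 with h | h
    · have : τ i = 0 := max_eq_left h
      rw [this]; simpa using sq_nonneg (F i i)
    · have hτi : τ i = δ - σ i := max_eq_right h.le
      have hFi : δ - σ i ≤ F i i := by linarith
      rw [hτi]
      have h1 : (0:ℝ) ≤ δ - σ i := h.le
      nlinarith
  calc ∑ i, ∑ j, ((Q * Matrix.diagonal τ * Qᵀ) i j) ^ 2
      = ∑ i, (τ i) ^ 2 := hE
    _ ≤ ∑ i, (F i i) ^ 2 := Finset.sum_le_sum fun i _ => hdiag i
    _ ≤ ∑ i, ∑ j, (F i j) ^ 2 := by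
        apply Finset.sum_le_sum
        intro i _
        exact Finset.single_le_sum (fun j _ => sq_nonneg (F i j)) (Finset.mem_univ i)
    _ = ∑ i, ∑ j, (E' i j) ^ 2 := hE'F.symm
end
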